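/- Let h > 0, let M be a positive integer, let t₁, …, t_M ∈ ℝ, define λ(t) = Σ_{i=1}^{M} exp(−(t − t_i)²/(2h²)) and λ̂(ω) = ∫_ℝ λ(t) e^{−iωt} dt. For every ε > 0 and every ω₀ ≥ 0, if erf(h ω₀ / √2) ≥ 1 − ε/(π M), then ∫_{ω₀}^{∞} |λ̂(ω)| dω ≤ ε. -/

import Mathlib

open MeasureTheory Set

private lemma kde_quad_aux (h ti ω c : ℂ) (hc : c * (2 * h ^ 2) = 1) (hc0 : c ≠ 0) :
    (-c * ti ^ 2) - (2 * c * ti - Complex.I * ω) ^ 2 / (4 * -c)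
      = -(Complex.I * ω * ti) + -(h ^ 2 * ω ^ 2 / 2) := by
  field_simp
  linear_combination (2 * ω ^ 2) * Complex.I_sq + (2 * ω ^ 2) * hc

/-- **Cut-off frequency criterion for the basis selection algorithm.**
If `λ(t) = Σ_{i=1}^{M} exp(−(t − t_i)²/(2h²))`, `λ̂(ω) = ∫ λ(t) e^{−iωt} dt`,
and `erf(h ω₀ / √2) ≥ 1 − ε/(π M)`, then `∫_{ω₀}^∞ |λ̂(ω)| dω ≤ ε`. -/
theorem gaussian_kde_cutoff_criterion
    (h : ℝ) (hh : 0 < h) (M : ℕ) (hM : 0 < M) (t : Fin M → ℝ)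
    (lam : ℝ → ℝ)
    (hlam : ∀ s : ℝ, lam s = ∑ i, Real.exp (-(s - t i) ^ 2 / (2 * h ^ 2)))
    (lamhat : ℝ → ℂ)
    (hlamhat : ∀ ω : ℝ,
      lamhat ω = ∫ s : ℝ, (lam s : ℂ) * Complex.exp (-(Complex.I * ω * s)))
    (erf : ℝ → ℝ)
    (herf : ∀ x : ℝ, erf x = 2 / Real.sqrt Real.pi * ∫ u in (0 : ℝ)..x, Real.exp (-u ^ 2))
    (ε : ℝ) (hε : 0 < ε) (ω₀ : ℝ) (hω₀ : 0 ≤ ω₀)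
    (hcut : erf (h * ω₀ / Real.sqrt 2) ≥ 1 - ε / (Real.pi * M)) :
    (∫ ω in Set.Ioi ω₀, ‖lamhat ω‖) ≤ ε := by
  have hπ := Real.pi_pos
  have h2h : (0:ℝ) < 2 * h ^ 2 := by positivity
  set x₀ : ℝ := h * ω₀ / Real.sqrt 2 with hx₀def
  set b : ℝ := (2 * h ^ 2)⁻¹ with hbdef
  have hb : 0 < b := by positivity
  have hbC : (-(b:ℂ)).re < 0 := by simpa using hb
  have hbC0 : (b:ℂ) ≠ 0 := by exact_mod_cast hb.ne'
  have hcmul : (b:ℂ) * (2 * (h:ℂ) ^ 2) = 1 := by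
    have hne : ((2 * h ^ 2 : ℝ) : ℂ) ≠ 0 := by exact_mod_cast h2h.ne'
    rw [hbdef]
    push_cast
    exact inv_mul_cancel₀ (by simp [hh.ne'])
  set A : ℝ := Real.sqrt 2 * Real.sqrt Real.pi * h with hAdef
  have hA : 0 < A := by positivity
  -- rewrite the integrand as a quadratic complex exponential
  have hexp : ∀ (ω s : ℝ) (i : Fin M),
      (Real.exp (-(s - t i) ^ 2 / (2 * h ^ 2)) : ℂ) * Complex.exp (-(Complex.I * ω * s))
        = Complex.exp (-(b:ℂ) * (s:ℂ) ^ 2 + (((2 * b * t i : ℝ) : ℂ) - Complex.I * ω) * s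
            + (-(b:ℂ) * ((t i : ℝ) : ℂ) ^ 2)) := by
    intro ω s i
    rw [Complex.ofReal_exp, ← Complex.exp_add]
    congr 1
    have hne : ((2 * h ^ 2 : ℝ) : ℂ) ≠ 0 := by exact_mod_cast h2h.ne'
    rw [hbdef]
    push_cast
    field_simp
    ring
  have hInt : ∀ (ω : ℝ) (i : Fin M),
      Integrable (fun s : ℝ =>
        (Real.exp (-(s - t i) ^ 2 / (2 * h ^ 2)) : ℂ) * Complex.exp (-(Complex.I * ω * s))) := by
    intro ω i
    simp_rw [hexp ω _ i]
    exact integrable_cexp_quadratic' hbC _ _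
  have hval : ∀ (ω : ℝ) (i : Fin M),
      (∫ s : ℝ, (Real.exp (-(s - t i) ^ 2 / (2 * h ^ 2)) : ℂ)
          * Complex.exp (-(Complex.I * ω * s)))
        = (A:ℂ) * Complex.exp (-(Complex.I * ω * t i) + ((-(h ^ 2 * ω ^ 2 / 2) : ℝ) : ℂ)) := by
    intro ω i
    simp_rw [hexp ω _ i]
    rw [integral_cexp_quadratic hbC]
    rw [neg_neg]
    congr 1
    · rw [← Complex.ofReal_div,
        show (Real.pi / b : ℝ) = 2 * Real.pi * h ^ 2 by rw [hbdef]; field_simp]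
      rw [show (1/2 : ℂ) = ((1/2 : ℝ) : ℂ) by norm_num,
        ← Complex.ofReal_cpow (by positivity)]
      norm_cast
      rw [← Real.sqrt_eq_rpow, hAdef,
        show (2 * Real.pi * h ^ 2 : ℝ) = 2 * Real.pi * h ^ 2 from rfl,
        Real.sqrt_mul (by positivity : (0:ℝ) ≤ 2 * Real.pi) (h ^ 2),
        Real.sqrt_mul (by norm_num : (0:ℝ) ≤ 2) Real.pi, Real.sqrt_sq hh.le]
    · congr 1
      push_cast
      linear_combination kde_quad_aux (h:ℂ) (t i) ω (b:ℂ) hcmul hbC0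
  -- closed form of `lamhat`
  have key : ∀ ω : ℝ, lamhat ω
      = ∑ i, (A:ℂ) * Complex.exp (-(Complex.I * ω * t i) + ((-(h ^ 2 * ω ^ 2 / 2) : ℝ) : ℂ)) := by
    intro ω
    rw [hlamhat ω]
    have hsum : ∀ s : ℝ, (lam s : ℂ) * Complex.exp (-(Complex.I * ω * s))
        = ∑ i, (Real.exp (-(s - t i) ^ 2 / (2 * h ^ 2)) : ℂ)
            * Complex.exp (-(Complex.I * ω * s)) := by
      intro s
      rw [hlam s]
      push_cast
      rw [Finset.sum_mul]
    simp_rw [hsum]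
    rw [integral_finset_sum _ fun i _ => hInt ω i]
    exact Finset.sum_congr rfl fun i _ => hval ω i
  -- pointwise bound
  have habs : ∀ ω : ℝ, ‖lamhat ω‖
      ≤ (M:ℝ) * A * Real.exp (-(h ^ 2 / 2) * ω ^ 2) := by
    intro ω
    rw [key ω]
    refine le_trans (norm_sum_le _ _) ?_
    have hterm : ∀ i : Fin M,
        ‖(A:ℂ) * Complex.exp (-(Complex.I * ω * t i) + ((-(h ^ 2 * ω ^ 2 / 2) : ℝ) : ℂ))‖
          = A * Real.exp (-(h ^ 2 / 2) * ω ^ 2) := by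
      intro i
      rw [norm_mul, Complex.norm_exp, Complex.norm_of_nonneg hA.le]
      congr 1
      simp [Complex.add_re, Complex.neg_re, Complex.mul_re, ← Complex.ofReal_pow]
      ring
    rw [Finset.sum_congr rfl fun i _ => hterm i, Finset.sum_const, Finset.card_univ,
      Fintype.card_fin, nsmul_eq_mul]
    exact le_of_eq (by ring)
  -- integrability of the bound and of |lamhat|
  have hb2 : (0:ℝ) < h ^ 2 / 2 := by positivity
  have hgInt : Integrable (fun ω : ℝ => (M:ℝ) * A * Real.exp (-(h ^ 2 / 2) * ω ^ 2)) :=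
    (integrable_exp_neg_mul_sq hb2).const_mul _
  have hcont : Continuous (fun ω : ℝ =>
      ‖∑ i, (A:ℂ) * Complex.exp (-(Complex.I * ω * t i)
        + ((-(h ^ 2 * ω ^ 2 / 2) : ℝ) : ℂ))‖) := by
    refine continuous_norm.comp (continuous_finset_sum _ fun i _ => ?_)
    refine continuous_const.mul (Complex.continuous_exp.comp ?_)
    fun_prop
  have hfmeas : AEStronglyMeasurable (fun ω : ℝ => ‖lamhat ω‖)
      (volume.restrict (Ioi ω₀)) := by
    have hfeq : (fun ω : ℝ => ‖lamhat ω‖)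
        = fun ω : ℝ => ‖∑ i, (A:ℂ) * Complex.exp (-(Complex.I * ω * t i)
            + ((-(h ^ 2 * ω ^ 2 / 2) : ℝ) : ℂ))‖ := funext fun ω => by rw [key ω]
    rw [hfeq]
    exact hcont.aestronglyMeasurable.restrict
  have hfInt : IntegrableOn (fun ω : ℝ => ‖lamhat ω‖) (Ioi ω₀) := by
    refine Integrable.mono hgInt.integrableOn hfmeas
      (Filter.Eventually.of_forall fun ω => ?_)
    rw [Real.norm_eq_abs, Real.norm_eq_abs, abs_of_nonneg (norm_nonneg _),
      abs_of_nonneg (by positivity)]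
    exact habs ω
  have step1 : (∫ ω in Ioi ω₀, ‖lamhat ω‖)
      ≤ ∫ ω in Ioi ω₀, (M:ℝ) * A * Real.exp (-(h ^ 2 / 2) * ω ^ 2) :=
    integral_mono hfInt hgInt.integrableOn fun ω => habs ω
  -- compute the Gaussian tail integral
  have hJsplit : (∫ ω in Ioi (0:ℝ), Real.exp (-(h ^ 2 / 2) * ω ^ 2))
      = (∫ ω in Ioc (0:ℝ) ω₀, Real.exp (-(h ^ 2 / 2) * ω ^ 2))
        + ∫ ω in Ioi ω₀, Real.exp (-(h ^ 2 / 2) * ω ^ 2) := by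
    rw [← Set.Ioc_union_Ioi_eq_Ioi hω₀]
    exact setIntegral_union (Set.Ioc_disjoint_Ioi le_rfl) measurableSet_Ioi
      (integrable_exp_neg_mul_sq hb2).integrableOn (integrable_exp_neg_mul_sq hb2).integrableOn
  have hIoi0 : (∫ ω in Ioi (0:ℝ), Real.exp (-(h ^ 2 / 2) * ω ^ 2))
      = Real.sqrt (Real.pi / (h ^ 2 / 2)) / 2 := integral_gaussian_Ioi _
  have hIoc : (∫ ω in Ioc (0:ℝ) ω₀, Real.exp (-(h ^ 2 / 2) * ω ^ 2))
      = (Real.sqrt 2 / h) * (Real.sqrt Real.pi / 2 * erf x₀) := by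
    rw [← intervalIntegral.integral_of_le hω₀]
    set c : ℝ := h / Real.sqrt 2 with hcdef
    have hc0 : c ≠ 0 := by positivity
    have hcc : ∀ ω : ℝ, Real.exp (-(h ^ 2 / 2) * ω ^ 2)
        = (fun u => Real.exp (-u ^ 2)) (c * ω) := by
      intro ω
      simp only
      congr 1
      rw [hcdef, mul_pow, div_pow, Real.sq_sqrt (by norm_num : (0:ℝ) ≤ 2)]
      ring
    simp_rw [hcc]
    rw [intervalIntegral.integral_comp_mul_left (fun u => Real.exp (-u ^ 2)) hc0]
    rw [mul_zero, show c * ω₀ = x₀ by rw [hcdef, hx₀def]; ring, smul_eq_mul]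
    have herfv : (∫ u in (0:ℝ)..x₀, Real.exp (-u ^ 2))
        = Real.sqrt Real.pi / 2 * erf x₀ := by
      rw [herf x₀]
      have hsπ : Real.sqrt Real.pi ≠ 0 := by positivity
      field_simp
    rw [herfv, hcdef, inv_div]
  have hIoi : (∫ ω in Ioi ω₀, Real.exp (-(h ^ 2 / 2) * ω ^ 2))
      = Real.sqrt (Real.pi / (h ^ 2 / 2)) / 2
        - (Real.sqrt 2 / h) * (Real.sqrt Real.pi / 2 * erf x₀) := by
    rw [← hIoi0, hJsplit, hIoc]; ring
  have hsq : Real.sqrt (Real.pi / (h ^ 2 / 2)) = Real.sqrt 2 * Real.sqrt Real.pi / h := by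
    rw [show Real.pi / (h ^ 2 / 2) = 2 * Real.pi / h ^ 2 by field_simp,
      Real.sqrt_div (by positivity : (0:ℝ) ≤ 2 * Real.pi) (h ^ 2),
      Real.sqrt_mul (by norm_num : (0:ℝ) ≤ 2) Real.pi, Real.sqrt_sq hh.le]
  have h2s : Real.sqrt 2 * Real.sqrt 2 = 2 := Real.mul_self_sqrt (by norm_num)
  have hπs : Real.sqrt Real.pi * Real.sqrt Real.pi = Real.pi := Real.mul_self_sqrt hπ.le
  have step2 : (∫ ω in Ioi ω₀, (M:ℝ) * A * Real.exp (-(h ^ 2 / 2) * ω ^ 2))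
      = (M:ℝ) * Real.pi * (1 - erf x₀) := by
    rw [integral_const_mul, hIoi, hsq, hAdef]
    field_simp
    linear_combination ((1 - erf x₀)*(Real.sqrt Real.pi*Real.sqrt Real.pi)) * h2s + (2*(1 - erf x₀)) * hπs
  have hMpos : (0:ℝ) < (M:ℝ) := by exact_mod_cast hM
  have hfinal : (M:ℝ) * Real.pi * (1 - erf x₀) ≤ ε := by
    have h1 : 1 - erf x₀ ≤ ε / (Real.pi * M) := by linarith [hcut]
    calc (M:ℝ) * Real.pi * (1 - erf x₀) ≤ (M:ℝ) * Real.pi * (ε / (Real.pi * M)) := by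
          exact mul_le_mul_of_nonneg_left h1 (by positivity)
      _ = ε := by field_simp
  calc (∫ ω in Ioi ω₀, ‖lamhat ω‖)
      ≤ ∫ ω in Ioi ω₀, (M:ℝ) * A * Real.exp (-(h ^ 2 / 2) * ω ^ 2) := step1
    _ = (M:ℝ) * Real.pi * (1 - erf x₀) := step2
    _ ≤ ε := hfinal
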